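/- Let X be a Polish Abelian group and let A be a Borel subset of X which is null-finite. Then A is both Haar-null and Haar-meager in X. -/

import Mathlib

open Set Filter Topology Pointwise MeasureTheory

/-- A Borel set `A` in a topological Abelian group is *Haar-meager* if there is a continuous
map `f` from the Cantor cube `ℕ → Bool` such that `f ⁻¹' (A + x)` is meager for every `x`. -/
def HaarMeager {X : Type*} [TopologicalSpace X] [AddCommGroup X] (A : Set X) : Prop :=
  ∃ f : (ℕ → Bool) → X, Continuous f ∧ ∀ x : X, IsMeagre (f ⁻¹' ((fun a => a + x) '' A))

/-- A set `A` is *Haar-null* if there is a Borel probability measure `μ` on `X` such that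
`μ (A + x) = 0` for every `x ∈ X`. -/
def HaarNull {X : Type*} [MeasurableSpace X] [AddCommGroup X] (A : Set X) : Prop :=
  ∃ μ : Measure X, IsProbabilityMeasure μ ∧ ∀ x : X, μ ((fun a => a + x) '' A) = 0

/-- A subset `T` of the Cantor cube is *thin* if for every coordinate `n`, any two elements
of `T` agreeing at all coordinates except possibly `n` are equal. -/
def IsThinSet (T : Set (ℕ → Bool)) : Prop :=
  ∀ n : ℕ, ∀ s ∈ T, ∀ t ∈ T, (∀ m : ℕ, m ≠ n → s m = t m) → s = t

/-- A set `A` is *Haar-thin* if there is a continuous map `f` from the Cantor cube such that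
`f ⁻¹' (A + x)` is thin for every `x`. -/
def HaarThin {X : Type*} [TopologicalSpace X] [AddCommGroup X] (A : Set X) : Prop :=
  ∃ f : (ℕ → Bool) → X, Continuous f ∧ ∀ x : X, IsThinSet (f ⁻¹' ((fun a => a + x) '' A))

/-- A set `A` is *null-finite* if there is a null sequence `(x n)` such that
`{n | x n + y ∈ A}` is finite for every `y`. -/
def NullFinite {X : Type*} [TopologicalSpace X] [AddCommGroup X] (A : Set X) : Prop :=
  ∃ x : ℕ → X, Tendsto x atTop (nhds 0) ∧ ∀ y : X, {n : ℕ | x n + y ∈ A}.Finite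

/-- A set `A` is *Haar-open* if for every compact `K` and `p ∈ K` there is `x` such that
`K ∩ (A + x)` is a neighborhood of `p` in the subspace `K`. -/
def HaarOpen {X : Type*} [TopologicalSpace X] [AddCommGroup X] (A : Set X) : Prop :=
  ∀ K : Set X, IsCompact K → ∀ p ∈ K, ∃ x : X,
    K ∩ ((fun a => a + x) '' A) ∈ nhdsWithin p K

set_option linter.unusedSectionVars false

noncomputable section AuxNF

section Construction
variable {X : Type*} [MetricSpace X] [CompleteSpace X] [AddCommGroup X] [IsTopologicalAddGroup X]

private theorem nf_step (x : ℕ → X) (hx : Tendsto x atTop (nhds 0)) (P : Finset X) (N n : ℕ) :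
    ∃ k, N < k ∧ ∀ p ∈ P, dist (p + x k) p < (1/2)^n := by
  have h1 : ∀ᶠ k in atTop, ∀ p ∈ P, dist (p + x k) p < (1/2)^n := by
    rw [Finset.eventually_all]
    intro p _
    have h2 : Tendsto (fun k => p + x k) atTop (nhds p) := by
      simpa using hx.const_add p
    have := (Metric.tendsto_nhds.mp h2) ((1/2)^n) (by positivity)
    exact this
  have h3 : ∀ᶠ k in atTop, N < k := eventually_gt_atTop N
  exact (h3.and h1).exists

private noncomputable def nfState (x : ℕ → X)
    (hx : Tendsto x atTop (nhds 0)) : ℕ → ℕ × Finset X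
  | 0 => (0, {0})
  | (n+1) =>
    letI := Classical.decEq X
    let prev := nfState x hx n
    let c := (nf_step x hx prev.2 prev.1 n).choose
    (c, prev.2 ∪ prev.2.image (· + x c))

theorem exists_cantor_map (x : ℕ → X) (hx : Tendsto x atTop (nhds 0)) :
    ∃ (f : (ℕ → Bool) → X) (k : ℕ → ℕ), Continuous f ∧ StrictMono k ∧
      ∀ (s : ℕ → Bool) (n : ℕ), s n = false →
        f (Function.update s n true) = f s + x (k n) := by
  classical
  set g := nfState x hx with hg
  set k : ℕ → ℕ := fun n => (g (n+1)).1 with hk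
  set z : ℕ → X := fun n => x (k n) with hz
  -- basic recursion facts
  have hgsucc : ∀ n, (g (n+1)) =
      ((nf_step x hx (g n).2 (g n).1 n).choose,
        (g n).2 ∪ (g n).2.image (· + x ((nf_step x hx (g n).2 (g n).1 n).choose))) := by
    intro n; rfl
  have hmono : StrictMono k := by
    have hstep : ∀ n, k n < k (n+1) := by
      intro n
      have h1 : (g (n+1)).1 < (g (n+2)).1 := by
        rw [hgsucc (n+1)]
        exact (nf_step x hx (g (n+1)).2 (g (n+1)).1 (n+1)).choose_spec.1
      exact h1
    exact strictMono_nat_of_lt_succ hstep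
  have hsub : ∀ n, (g n).2 ⊆ (g (n+1)).2 := by
    intro n; rw [hgsucc n]; exact Finset.subset_union_left
  have hdist : ∀ n, ∀ p ∈ (g n).2, dist (p + z n) p < (1/2)^n ∧ p + z n ∈ (g (n+1)).2 := by
    intro n p hp
    constructor
    · exact (nf_step x hx (g n).2 (g n).1 n).choose_spec.2 p hp
    · rw [hgsucc n]
      exact Finset.mem_union_right _ (Finset.mem_image_of_mem _ hp)
  -- partial sums
  set q : (ℕ → Bool) → ℕ → X :=
    fun s n => ∑ i ∈ Finset.range n, (if s i then z i else 0) with hq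
  have hqmem : ∀ s n, q s n ∈ (g n).2 := by
    intro s n
    induction n with
    | zero => simp [hq, hg, nfState]
    | succ n ih =>
      rw [hq]
      simp only [Finset.sum_range_succ]
      by_cases h : s n = true
      · rw [if_pos h]
        exact (hdist n _ ih).2
      · rw [if_neg h, add_zero]
        exact hsub n ih
  have hqdist : ∀ s n, dist (q s n) (q s (n+1)) ≤ 2 / 2 / 2^n := by
    intro s n
    have : q s (n+1) = q s n + (if s n then z n else 0) := Finset.sum_range_succ _ n
    rw [this]
    by_cases h : s n
    · simp only [h, if_true]
      have h1 := (hdist n _ (hqmem s n)).1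
      rw [dist_comm]
      refine le_of_lt (lt_of_lt_of_le h1 ?_)
      rw [div_pow, one_pow]
      norm_num
    · simp only [if_neg h, add_zero, dist_self]
      positivity
  have hcau : ∀ s, CauchySeq (q s) := fun s => cauchySeq_of_le_geometric_two (hqdist s)
  choose f hf using fun s => cauchySeq_tendsto_of_complete (hcau s)
  have hflim : ∀ s n, dist (q s n) (f s) ≤ 2 / 2^n :=
    fun s n => dist_le_of_le_geometric_two_of_tendsto (hqdist s) (hf s) n
  refine ⟨f, k, ?_, hmono, ?_⟩
  · -- continuity
    rw [continuous_iff_continuousAt]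
    intro s
    rw [ContinuousAt, Metric.tendsto_nhds]
    intro ε hε
    obtain ⟨n, hn⟩ : ∃ n : ℕ, 4 / 2^n < ε := by
      obtain ⟨n, hn⟩ := pow_unbounded_of_one_lt (4/ε) (one_lt_two (α := ℝ))
      exact ⟨n, by rw [div_lt_iff₀ (by positivity)] at hn ⊢; linarith [hn]⟩
    have hV : {t : ℕ → Bool | ∀ i < n, t i = s i} ∈ nhds s := by
      have : {t : ℕ → Bool | ∀ i < n, t i = s i} =
          ⋂ i ∈ Finset.range n, (fun t : ℕ → Bool => t i) ⁻¹' {s i} := by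
        ext t; simp [Finset.mem_range]
      rw [this]
      refine (Filter.biInter_finset_mem _).mpr (fun i _ => ?_)
      exact (continuous_apply i).continuousAt.preimage_mem_nhds (by simp)
    filter_upwards [hV] with t ht
    have hqe : q t n = q s n := by
      refine Finset.sum_congr rfl (fun i hi => ?_)
      rw [ht i (Finset.mem_range.mp hi)]
    calc dist (f t) (f s) ≤ dist (f t) (q s n) + dist (q s n) (f s) := dist_triangle _ _ _
      _ ≤ 2/2^n + 2/2^n :=
          add_le_add (by rw [← hqe, dist_comm]; exact hflim t n) (hflim s n)
      _ < ε := by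
          have h4 : (2:ℝ)/2^n + 2/2^n = 4/2^n := by ring
          rw [h4]; exact hn
  · -- flip identity
    intro s n hsn
    set s' := Function.update s n true with hs'
    have hkey : ∀ m, n < m → q s' m = z n + q s m := by
      intro m hm
      have hfun : (fun i => if s' i then z i else 0) =
          Function.update (fun i => if s i then z i else 0) n (z n) := by
        funext i
        by_cases h : i = n
        · subst h; simp [hs', Function.update_self]
        · simp [hs', Function.update_of_ne h]
      rw [hq]
      simp only [hfun]
      rw [Finset.sum_update_of_mem (Finset.mem_range.mpr hm)]
      congr 1
      rw [← Finset.erase_eq, ← Finset.add_sum_erase _ _ (Finset.mem_range.mpr hm)]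
      simp [hsn]
    have h1 : Tendsto (fun m => q s' m) atTop (nhds (z n + f s)) := by
      have h2 : Tendsto (fun m => z n + q s m) atTop (nhds (z n + f s)) :=
        (hf s).const_add (z n)
      refine h2.congr' ?_
      filter_upwards [eventually_gt_atTop n] with m hm
      exact (hkey m hm).symm
    have := tendsto_nhds_unique (hf s') h1
    rw [this, add_comm]

end Construction


theorem exists_cantor_map_polish {X : Type*} [TopologicalSpace X] [AddCommGroup X]
    [IsTopologicalAddGroup X] [PolishSpace X] (x : ℕ → X) (hx : Tendsto x atTop (nhds 0)) :
    ∃ (f : (ℕ → Bool) → X) (k : ℕ → ℕ), Continuous f ∧ StrictMono k ∧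
      ∀ (s : ℕ → Bool) (n : ℕ), s n = false →
        f (Function.update s n true) = f s + x (k n) := by
  letI := TopologicalSpace.upgradeIsCompletelyMetrizable X
  exact exists_cantor_map x hx

noncomputable section Cube

/-- Group structure on `Bool` given by `xor`. -/
instance Bool.addCommGroupXor : AddCommGroup Bool where
  add := xor
  zero := false
  neg := id
  add_assoc := by decide
  zero_add := by decide
  add_zero := by decide
  neg_add_cancel := by decide
  add_comm := by decide
  nsmul := nsmulRec
  zsmul := zsmulRec

instance Bool.topologicalAddGroupXor : IsTopologicalAddGroup Bool where
  continuous_add := continuous_of_discreteTopology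
  continuous_neg := continuous_of_discreteTopology

/-- The basis vector of the Cantor cube supported at `n`. -/
def cubeE (n : ℕ) : ℕ → Bool := fun i => if i = n then true else false

theorem cubeE_add (n : ℕ) (s : ℕ → Bool) :
    cubeE n + s = Function.update s n (!s n) := by
  funext i
  change xor (cubeE n i) (s i) = Function.update s n (!s n) i
  by_cases h : i = n
  · subst h
    rw [Function.update_self]
    simp only [cubeE, if_pos rfl]
    cases s i <;> rfl
  · rw [Function.update_of_ne h]
    simp only [cubeE, if_neg h]
    cases s i <;> rfl

/-- Cylinders form a neighborhood basis in the Cantor cube. -/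
theorem cube_cyl_subset {U : Set (ℕ → Bool)} (hU : IsOpen U) {c : ℕ → Bool} (hc : c ∈ U) :
    ∃ N, {d : ℕ → Bool | ∀ i < N, d i = c i} ⊆ U := by
  have hnhds : U ∈ nhds c := hU.mem_nhds hc
  rw [nhds_pi, Filter.mem_pi] at hnhds
  obtain ⟨I, hIfin, V, hV, hsub⟩ := hnhds
  obtain ⟨N, hN⟩ : ∃ N, ∀ i ∈ I, i < N := by
    obtain ⟨N, hN⟩ := hIfin.bddAbove
    exact ⟨N + 1, fun i hi => Nat.lt_succ_of_le (hN hi)⟩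
  refine ⟨N, fun d hd => hsub ?_⟩
  intro i hi
  have : d i = c i := hd i (hN i hi)
  rw [this]
  exact mem_of_mem_nhds (hV i)

/-- The set of sequences having only finitely many `false` entries is meager. -/
theorem cube_eventually_true_meager :
    IsMeagre {c : ℕ → Bool | ∃ M, ∀ n, M ≤ n → c n = true} := by
  have : {c : ℕ → Bool | ∃ M, ∀ n, M ≤ n → c n = true} =
      ⋃ M : ℕ, {c : ℕ → Bool | ∀ n, M ≤ n → c n = true} := by
    ext c; simp [Set.mem_iUnion]
  rw [this]
  refine isMeagre_iUnion (fun M => ?_)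
  -- each piece is closed with empty interior
  have hclosed : IsClosed {c : ℕ → Bool | ∀ n, M ≤ n → c n = true} := by
    have : {c : ℕ → Bool | ∀ n, M ≤ n → c n = true} =
        ⋂ n, ⋂ (_ : M ≤ n), (fun c : ℕ → Bool => c n) ⁻¹' {true} := by
      ext c; simp
    rw [this]
    exact isClosed_iInter fun n => isClosed_iInter fun _ =>
      (IsClosed.preimage (continuous_apply n) isClosed_singleton)
  have hint : interior {c : ℕ → Bool | ∀ n, M ≤ n → c n = true} = ∅ := by
    by_contra h
    obtain ⟨c, hc⟩ := Set.nonempty_iff_ne_empty.mpr h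
    obtain ⟨N, hN⟩ := cube_cyl_subset isOpen_interior hc
    set n := max N M with hn
    have hd : Function.update c n false ∈ interior {c : ℕ → Bool | ∀ n, M ≤ n → c n = true} := by
      apply hN
      intro i hi
      exact Function.update_of_ne (by omega) _ _
    have := interior_subset hd
    have hfalse := this n (le_max_right _ _)
    rw [Function.update_self] at hfalse
    exact Bool.false_ne_true hfalse
  -- closed with empty interior ⇒ meager
  unfold IsMeagre
  apply residual_of_dense_open hclosed.isOpen_compl
  exact interior_eq_empty_iff_dense_compl.mp hint
end Cube

lemma IsMeagre.union' {Y : Type*} [TopologicalSpace Y] {s t : Set Y}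
    (hs : IsMeagre s) (ht : IsMeagre t) : IsMeagre (s ∪ t) := by
  rw [IsMeagre, Set.compl_union]
  exact Filter.inter_mem hs ht


/-- Every Borel null-finite subset of a Polish Abelian group is Haar-null and Haar-meager. -/
theorem statement14 {X : Type*} [TopologicalSpace X] [AddCommGroup X]
    [IsTopologicalAddGroup X] [PolishSpace X] [MeasurableSpace X] [BorelSpace X]
    (A : Set X) (hBorel : MeasurableSet A) (hA : NullFinite A) :
    HaarNull A ∧ HaarMeager A := by
  classical
  obtain ⟨x, hx, hfin⟩ := hA
  obtain ⟨f, k, hfc, hkmono, hflip⟩ := exists_cantor_map_polish x hx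
  have himg : ∀ (y : X) (b : X), b ∈ (fun a => a + y) '' A ↔ b - y ∈ A := by
    intro y b
    constructor
    · rintro ⟨a, ha, rfl⟩; simpa using ha
    · intro h; exact ⟨b - y, h, sub_add_cancel b y⟩
  have hkey : ∀ (y : X) (c : ℕ → Bool),
      {n : ℕ | c n = false ∧ f (Function.update c n true) ∈ (fun a => a + y) '' A}.Finite := by
    intro y c
    refine ((hfin (f c - y)).preimage (hkmono.injective.injOn)).subset ?_
    rintro n ⟨hc, hmem⟩
    rw [himg, hflip c n hc] at hmem
    show x (k n) + (f c - y) ∈ A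
    convert hmem using 1
    abel
  have himgmeas : ∀ y : X, MeasurableSet ((fun a => a + y) '' A) := by
    intro y
    have h1 : (fun a => a + y) '' A = (fun b => b - y) ⁻¹' A := by
      ext b; rw [himg]; exact Iff.rfl
    rw [h1]
    exact hBorel.preimage ((continuous_id.sub continuous_const).measurable)
  have hTmeas : ∀ y : X, MeasurableSet (f ⁻¹' ((fun a => a + y) '' A)) :=
    fun y => (himgmeas y).preimage hfc.measurable
  have hkey' : ∀ (y : X) (c : ℕ → Bool),
      {n : ℕ | c n = false ∧ cubeE n + c ∈ f ⁻¹' ((fun a => a + y) '' A)}.Finite := by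
    intro y c
    refine (hkey y c).subset ?_
    rintro n ⟨h1, h2⟩
    refine ⟨h1, ?_⟩
    rw [Set.mem_preimage, cubeE_add, h1] at h2
    simpa using h2
  have hflipn : ∀ (n : ℕ) (c : ℕ → Bool), (cubeE n + c) n = !(c n) := by
    intro n c
    rw [cubeE_add]
    exact Function.update_self n (!(c n)) c
  have hflipo : ∀ (n i : ℕ) (c : ℕ → Bool), i ≠ n → (cubeE n + c) i = c i := by
    intro n i c hi
    rw [cubeE_add]
    exact Function.update_of_ne hi _ _
  constructor
  · -- Haar null
    set K0 : TopologicalSpace.PositiveCompacts (ℕ → Bool) :=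
      ⟨⟨Set.univ, isCompact_univ⟩, by simp⟩ with hK0
    haveI hprob : IsProbabilityMeasure (Measure.addHaarMeasure K0) :=
      ⟨Measure.addHaarMeasure_self (K₀ := K0)⟩
    set lam : Measure (ℕ → Bool) := Measure.addHaarMeasure K0 with hlam
    refine ⟨Measure.map f lam, Measure.isProbabilityMeasure_map hfc.measurable.aemeasurable, fun y => ?_⟩
    rw [Measure.map_apply hfc.measurable (himgmeas y)]
    set T := f ⁻¹' ((fun a => a + y) '' A) with hT
    by_contra ht0
    have htop : lam T ≠ ⊤ := measure_ne_top _ _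
    set ε := lam T / 8 with hε
    have hε0 : ε ≠ 0 := (ENNReal.div_pos ht0 (by norm_num)).ne'
    have hεtop : ε ≠ ⊤ := (ENNReal.div_lt_top htop (by norm_num)).ne
    have h8ε : 8 * ε = lam T := ENNReal.mul_div_cancel' (by norm_num) (by norm_num)
    obtain ⟨U, hTU, hUopen, hUlt⟩ :=
      Set.exists_isOpen_lt_of_lt T (lam T + ε) (ENNReal.lt_add_right htop hε0)
    -- cylinders
    set cyl : List Bool → Set (ℕ → Bool) :=
      fun L => {c | ∀ i < L.length, c i = L.getD i false} with hcyl
    have hcylopen : ∀ L, IsOpen (cyl L) := by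
      intro L
      have h1 : cyl L = ⋂ i ∈ Finset.range L.length,
          (fun d : ℕ → Bool => d i) ⁻¹' {L.getD i false} := by
        ext d; simp [hcyl, Finset.mem_range]
      rw [h1]
      exact isOpen_biInter_finset fun i _ =>
        (continuous_apply i).isOpen_preimage _ (isOpen_discrete _)
    have hcylDet : ∀ (L : List Bool) (c d : ℕ → Bool), (∀ i < L.length, c i = d i) →
        c ∈ cyl L → d ∈ cyl L := by
      intro L c d h hc i hi
      rw [← h i hi]
      exact hc i hi
    set W : ℕ → Set (ℕ → Bool) := fun j =>
      (Encodable.decode (α := List Bool) j).elim ∅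
        (fun L => if cyl L ⊆ U then cyl L else ∅) with hW
    have hWfacts : ∀ j, (W j = ∅) ∨ (∃ L, Encodable.decode (α := List Bool) j = some L ∧
        W j = cyl L ∧ cyl L ⊆ U) := by
      intro j
      simp only [hW]
      cases hdec : Encodable.decode (α := List Bool) j with
      | none => left; simp
      | some L =>
        by_cases hsub : cyl L ⊆ U
        · right; exact ⟨L, rfl, by simp [hsub], hsub⟩
        · left; simp [hsub]
    have hWenc : ∀ L : List Bool, cyl L ⊆ U → W (Encodable.encode L) = cyl L := by
      intro L h
      simp only [hW]
      simp [Encodable.encodek, h]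
    have hWU : ∀ j, W j ⊆ U := by
      intro j
      rcases hWfacts j with h | ⟨L, _, hWL, hLU⟩
      · rw [h]; exact Set.empty_subset _
      · rw [hWL]; exact hLU
    have hWopen : ∀ j, IsOpen (W j) := by
      intro j
      rcases hWfacts j with h | ⟨L, _, hWL, _⟩
      · rw [h]; exact isOpen_empty
      · rw [hWL]; exact hcylopen L
    set V : Set (ℕ → Bool) := ⋃ j, W j with hV
    have hVU : V ⊆ U := Set.iUnion_subset hWU
    have hTV : T ⊆ V := by
      intro c hc
      obtain ⟨N', hN'⟩ := cube_cyl_subset hUopen (hTU hc)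
      set L : List Bool := (List.range N').map c with hL
      have hcylL : cyl L = {d : ℕ → Bool | ∀ i < N', d i = c i} := by
        ext d
        simp only [hcyl, Set.mem_setOf_eq, hL, List.length_map, List.length_range]
        refine forall_congr' (fun i => imp_congr_right (fun hi => ?_))
        rw [List.getD_eq_getElem?_getD, List.getElem?_map, List.getElem?_range hi]
        simp
      have hLU : cyl L ⊆ U := by rw [hcylL]; exact hN'
      have hcL : c ∈ cyl L := by rw [hcylL]; intro i _; rfl
      refine Set.mem_iUnion.mpr ⟨Encodable.encode L, ?_⟩
      rw [hWenc L hLU]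
      exact hcL
    set B : ℕ → Set (ℕ → Bool) := fun m => ⋃ j ∈ Finset.range m, W j with hB
    have hBmono : Monotone B := by
      intro a b hab c hc
      simp only [hB, Set.mem_iUnion, Finset.mem_range] at hc ⊢
      obtain ⟨j, hj, h⟩ := hc
      exact ⟨j, by omega, h⟩
    have hBV : (⋃ m, B m) = V := by
      apply Set.Subset.antisymm
      · exact Set.iUnion_subset fun m => Set.iUnion₂_subset fun j _ => Set.subset_iUnion W j
      · intro c hc
        obtain ⟨j, hj⟩ := Set.mem_iUnion.mp hc
        refine Set.mem_iUnion.mpr ⟨j + 1, ?_⟩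
        exact Set.mem_biUnion (Finset.self_mem_range_succ j) hj
    have hBmeas : ∀ m, MeasurableSet (B m) :=
      fun m => (isOpen_biUnion (fun j _ => hWopen j)).measurableSet
    have hBsubV : ∀ m, B m ⊆ V := fun m => (Set.subset_iUnion B m).trans (le_of_eq hBV)
    obtain ⟨m, hm⟩ : ∃ m, lam T < lam (B m) + ε := by
      by_contra h'
      push_neg at h'
      have h1 : ∀ m, lam (B m) ≤ lam T - ε :=
        fun m => ENNReal.le_sub_of_add_le_right hεtop (h' m)
      have h2 : lam V ≤ lam T - ε := by
        rw [← hBV, (hBmono.directed_le).measure_iUnion]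
        exact iSup_le h1
      have h3 : lam T ≤ lam V := measure_mono hTV
      have h4 : lam T - ε < lam T := ENNReal.sub_lt_self htop ht0 hε0
      exact absurd (h3.trans h2) (not_le.mpr h4)
    set N1 : ℕ := (Finset.range m).sup
      (fun j => (Encodable.decode (α := List Bool) j).elim 0 List.length) with hN1
    have hBdet : ∀ c d : ℕ → Bool, (∀ i < N1, c i = d i) → c ∈ B m → d ∈ B m := by
      intro c d h hc
      simp only [hB, Set.mem_iUnion] at hc ⊢
      obtain ⟨j, hj, hcW⟩ := hc
      rcases hWfacts j with hemp | ⟨L, hdec, hWL, hLU⟩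
      · rw [hemp] at hcW; exact absurd hcW (Set.notMem_empty c)
      · refine ⟨j, hj, ?_⟩
        rw [hWL] at hcW ⊢
        refine hcylDet L c d (fun i hi => h i (lt_of_lt_of_le hi ?_)) hcW
        have h5 : L.length ≤ N1 := by
          simpa [hdec] using Finset.le_sup (f := fun j =>
            (Encodable.decode (α := List Bool) j).elim 0 List.length) hj
        exact h5
    -- the flip-up sets
    set E : ℕ → Set (ℕ → Bool) := fun n => {c | c n = false ∧ cubeE n + c ∈ T} with hE
    have hEmeas : ∀ n, MeasurableSet (E n) := by
      intro n
      have h1 : E n = ((fun c : ℕ → Bool => c n) ⁻¹' {false}) ∩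
          ((fun c => cubeE n + c) ⁻¹' T) := by
        ext c; simp [hE, Set.mem_inter_iff]
      rw [h1]
      exact ((measurable_pi_apply n) (measurableSet_singleton false)).inter
        ((hTmeas y).preimage (measurable_const_add _))
    have hElam : ∀ n, lam (E n) = lam (T ∩ {c | c n = true}) := by
      intro n
      have h1 : E n = (fun c => cubeE n + c) ⁻¹' (T ∩ {c | c n = true}) := by
        ext c
        simp only [hE, Set.mem_setOf_eq, Set.mem_preimage, Set.mem_inter_iff, hflipn]
        rw [Bool.not_eq_true']
        exact and_comm
      rw [h1, measure_preimage_add]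
    have hBflip : ∀ n, N1 ≤ n →
        lam (B m ∩ {c | c n = false}) = lam (B m ∩ {c | c n = true}) := by
      intro n hn
      have h1 : (fun c => cubeE n + c) ⁻¹' (B m ∩ {c | c n = true}) =
          B m ∩ {c | c n = false} := by
        ext c
        simp only [Set.mem_preimage, Set.mem_inter_iff, Set.mem_setOf_eq, hflipn]
        rw [Bool.not_eq_true']
        constructor
        · rintro ⟨h2, h3⟩
          exact ⟨hBdet (cubeE n + c) c (fun i hi => hflipo n i c (by omega)) h2, h3⟩
        · rintro ⟨h2, h3⟩
          exact ⟨hBdet c (cubeE n + c) (fun i hi => (hflipo n i c (by omega)).symm) h2, h3⟩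
      rw [← h1, measure_preimage_add]
    have hUTd : lam (U \ T) ≤ ε := by
      rw [measure_diff hTU (hTmeas y).nullMeasurableSet htop]
      refine tsub_le_iff_right.mpr ?_
      rw [add_comm]
      exact le_of_lt hUlt
    have hVBd : lam (V \ B m) ≤ ε + ε := by
      rw [measure_diff (hBsubV m) (hBmeas m).nullMeasurableSet (measure_ne_top _ _)]
      refine tsub_le_iff_right.mpr ?_
      calc lam V ≤ lam U := measure_mono hVU
        _ ≤ lam T + ε := le_of_lt hUlt
        _ ≤ (lam (B m) + ε) + ε := add_le_add_left (le_of_lt hm) ε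
        _ = ε + ε + lam (B m) := by ring
    have hlow : ∀ n, N1 ≤ n → ε < lam (E n) := by
      intro n hn
      rw [hElam n]
      by_contra hle
      push_neg at hle
      have step1 : lam T ≤ lam (T ∩ {c | c n = true}) + lam (T ∩ {c | c n = false}) := by
        refine le_trans (measure_mono ?_) (measure_union_le _ _)
        intro c hc
        by_cases h : c n = true
        · exact Or.inl ⟨hc, h⟩
        · exact Or.inr ⟨hc, Bool.eq_false_iff.mpr h⟩
      have step2 : lam (T ∩ {c | c n = false}) ≤
          lam (B m ∩ {c | c n = false}) + lam (V \ B m) := by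
        refine le_trans (measure_mono ?_) (measure_union_le _ _)
        intro c hc
        by_cases h : c ∈ B m
        · exact Or.inl ⟨h, hc.2⟩
        · exact Or.inr ⟨hTV hc.1, h⟩
      have step3 : lam (B m ∩ {c | c n = true}) ≤
          lam (T ∩ {c | c n = true}) + lam (U \ T) := by
        refine le_trans (measure_mono ?_) (measure_union_le _ _)
        intro c hc
        by_cases h : c ∈ T
        · exact Or.inl ⟨h, hc.2⟩
        · exact Or.inr ⟨hVU (hBsubV m hc.1), h⟩
      have htot : lam T ≤ 5 * ε := by
        calc lam T ≤ lam (T ∩ {c | c n = true}) + lam (T ∩ {c | c n = false}) := step1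
          _ ≤ lam (T ∩ {c | c n = true}) +
              (lam (B m ∩ {c | c n = false}) + lam (V \ B m)) := add_le_add_right step2 _
          _ = lam (T ∩ {c | c n = true}) +
              (lam (B m ∩ {c | c n = true}) + lam (V \ B m)) := by rw [hBflip n hn]
          _ ≤ lam (T ∩ {c | c n = true}) +
              ((lam (T ∩ {c | c n = true}) + lam (U \ T)) + lam (V \ B m)) := by
            exact add_le_add_right (add_le_add_left step3 _) _
          _ ≤ ε + ((ε + ε) + (ε + ε)) := by
            refine add_le_add hle (add_le_add (add_le_add hle hUTd) hVBd)
          _ = 5 * ε := by ring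
      have h8 : (8 : ENNReal) * ε ≤ 5 * ε := by
        rw [h8ε]
        exact htot
      rw [mul_comm (8 : ENNReal) ε, mul_comm (5 : ENNReal) ε] at h8
      have := (ENNReal.mul_le_mul_iff_right hε0 hεtop).mp h8
      norm_num at this
    -- a point in infinitely many E n
    set S : ℕ → Set (ℕ → Bool) := fun M => ⋃ (n) (_ : M + N1 ≤ n), E n with hS
    have hSmeas : ∀ M, NullMeasurableSet (S M) lam := by
      intro M
      exact (MeasurableSet.iUnion fun n =>
        MeasurableSet.iUnion fun _ => hEmeas n).nullMeasurableSet
    have hSanti : Antitone S := by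
      intro a b hab c hc
      simp only [hS, Set.mem_iUnion] at hc ⊢
      obtain ⟨n, hn, h⟩ := hc
      exact ⟨n, by omega, h⟩
    have hStend := tendsto_measure_iInter_atTop (μ := lam) hSmeas hSanti
      ⟨0, measure_ne_top _ _⟩
    have hLlb : ε ≤ lam (⋂ M, S M) := by
      refine ge_of_tendsto' hStend (fun M => ?_)
      show ε ≤ lam (S M)
      refine le_trans (le_of_lt (hlow (M + N1) (by omega))) (measure_mono ?_)
      intro c hc
      simp only [hS, Set.mem_iUnion]
      exact ⟨M + N1, le_refl _, hc⟩
    obtain ⟨c, hc⟩ := nonempty_of_measure_ne_zero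
      (fun h0 => hε0 (le_antisymm (h0 ▸ hLlb) (zero_le (a := ε))))
    rw [Set.mem_iInter] at hc
    obtain ⟨M0, hM0⟩ := (hkey' y c).bddAbove
    have hc1 := hc (M0 + 1)
    simp only [hS, Set.mem_iUnion] at hc1
    obtain ⟨n, hn, hcE⟩ := hc1
    have : n ∈ {n : ℕ | c n = false ∧ cubeE n + c ∈ T} := hcE
    have hbad : n ≤ M0 := hM0 this
    omega
  · -- Haar meager
    refine ⟨f, hfc, fun y => ?_⟩
    set T := f ⁻¹' ((fun a => a + y) '' A) with hT
    by_contra hmeager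
    obtain ⟨U, hUopen, hUeq⟩ := ((hTmeas y).baireMeasurableSet).residualEq_isOpen
    have hsymm : IsMeagre {c : ℕ → Bool | ¬ ((c ∈ T) = (c ∈ U))} := by
      have h1 : {c : ℕ → Bool | (c ∈ T) = (c ∈ U)} ∈ residual _ := hUeq
      rw [IsMeagre]
      have h2 : {c : ℕ → Bool | ¬ ((c ∈ T) = (c ∈ U))}ᶜ =
          {c : ℕ → Bool | (c ∈ T) = (c ∈ U)} := by
        ext c; simp
      rw [h2]
      exact h1
    have hUne : U.Nonempty := by
      rcases Set.eq_empty_or_nonempty U with h | h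
      · exfalso
        apply hmeager
        refine hsymm.mono (fun c hcT => ?_)
        simp only [Set.mem_setOf_eq, eq_iff_iff]
        intro heq
        have h3 : c ∈ U := heq.mp hcT
        rw [h] at h3
        exact h3
      · exact h
    obtain ⟨c0, hc0⟩ := hUne
    obtain ⟨N, hN⟩ := cube_cyl_subset hUopen hc0
    set C := {d : ℕ → Bool | ∀ i < N, d i = c0 i} with hC
    have hCopen : IsOpen C := by
      have h1 : C = ⋂ i ∈ Finset.range N, (fun d : ℕ → Bool => d i) ⁻¹' {c0 i} := by
        ext d; simp [hC, Finset.mem_range]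
      rw [h1]
      exact isOpen_biInter_finset fun i _ =>
        (continuous_apply i).isOpen_preimage _ (isOpen_discrete _)
    have hCT : IsMeagre (C \ T) := by
      refine hsymm.mono (fun c hc => ?_)
      simp only [Set.mem_setOf_eq, eq_iff_iff]
      intro hiff
      exact hc.2 (hiff.mpr (hN hc.1))
    set Bad : Set (ℕ → Bool) := {c | ∃ M, ∀ n, M ≤ n → c n = true} ∪
        ⋃ j : ℕ, (fun c => cubeE (N + j) + c) ⁻¹' (C \ T) with hBad
    have hBadMeager : IsMeagre Bad := by
      refine IsMeagre.union' cube_eventually_true_meager (isMeagre_iUnion (fun j => ?_))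
      exact hCT.preimage_of_isOpenMap (continuous_add_left _)
        (Homeomorph.addLeft (cubeE (N + j))).isOpenMap
    have hdense := dense_of_mem_residual hBadMeager
    obtain ⟨c, hcC, hcBad⟩ := hdense.inter_open_nonempty C hCopen
      ⟨c0, fun i _ => rfl⟩
    rw [Set.mem_compl_iff] at hcBad
    have hcBad' : ¬ (c ∈ {c : ℕ → Bool | ∃ M, ∀ n, M ≤ n → c n = true} ∨
        c ∈ ⋃ j : ℕ, (fun c => cubeE (N + j) + c) ⁻¹' (C \ T)) := by
      rw [← Set.mem_union, ← hBad]
      exact hcBad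
    push_neg at hcBad'
    obtain ⟨h1, h2⟩ := hcBad'
    have h1' : ∀ M, ∃ n, M ≤ n ∧ c n = false := by
      intro M
      by_contra h3
      push_neg at h3
      refine h1 ⟨M, fun n hn => ?_⟩
      cases hcn : c n
      · exact absurd hcn (h3 n hn)
      · rfl
    have h2' : ∀ j, cubeE (N + j) + c ∉ C \ T := by
      intro j hj
      exact h2 (Set.mem_iUnion.mpr ⟨j, hj⟩)
    obtain ⟨M0, hM0⟩ := (hkey' y c).bddAbove
    obtain ⟨n, hn1, hn2⟩ := h1' (max N (M0 + 1))
    have hnN : N ≤ n := le_trans (le_max_left _ _) hn1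
    have hnM : M0 + 1 ≤ n := le_trans (le_max_right _ _) hn1
    have h3 := h2' (n - N)
    rw [show N + (n - N) = n from by omega] at h3
    have hmemC : cubeE n + c ∈ C := by
      intro i hi
      rw [hflipo n i c (by omega)]
      exact hcC i hi
    have hmemT : cubeE n + c ∈ T := by
      by_contra h4
      exact h3 ⟨hmemC, h4⟩
    have h6 : n ∈ {n : ℕ | c n = false ∧ cubeE n + c ∈ T} := ⟨hn2, hmemT⟩
    have h7 := hM0 h6
    omega

end AuxNF
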